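/- Let ε > 0, let u ∈ ℝ² be a unit vector and let x ∈ ℝ² satisfy ⟨x,u⟩ = 0. Then ([0,x] ⊕ {y ∈ B(ε) : ⟨y,u⟩ ≥ 0}) \ (closedBall(0,ε) ∪ closedBall(x,ε)) ⊆ [0,x] ⊕ [0, εu], where [p,q] denotes the closed segment between p and q. -/

import Mathlib

open Pointwise MeasureTheory Metric

noncomputable section

/-- The plane `ℝ²`. -/
abbrev E2 := EuclideanSpace ℝ (Fin 2)

/-- The inclusion at the end of the proof of Lemma 1:
`([0,x] ⊕ B(ε)_u⁺) \ (closedBall(0,ε) ∪ closedBall(x,ε)) ⊆ [0,x] ⊕ [0, εu]`. -/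
theorem stmt_3 (ε : ℝ) (hε : 0 < ε)
    (u : E2) (hu : ‖u‖ = 1)
    (x : E2) (hxu : (inner ℝ x u : ℝ) = 0) :
    (segment ℝ (0 : E2) x + {y ∈ closedBall (0 : E2) ε | (inner ℝ y u : ℝ) ≥ 0}) \
        (closedBall (0 : E2) ε ∪ closedBall x ε) ⊆
      segment ℝ (0 : E2) x + segment ℝ (0 : E2) (ε • u) := by
  rintro p ⟨⟨s, hs, y, ⟨hyball, hyu⟩, rfl⟩, hp⟩
  rw [Set.mem_union] at hp
  push_neg at hp
  obtain ⟨hp0, hpx⟩ := hp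
  rw [mem_closedBall, not_le, dist_zero_right] at hp0
  rw [mem_closedBall, not_le] at hpx
  have hynorm : ‖y‖ ≤ ε := mem_closedBall_zero_iff.mp hyball
  have hx0 : x ≠ 0 := by
    rintro rfl
    have hs0 : s = 0 := by simpa using hs
    rw [hs0, zero_add] at hp0
    exact absurd hynorm (not_le.mpr hp0)
  obtain ⟨ta, t, h0a, h0t, hat, hts⟩ := hs
  have ht1 : t ≤ 1 := by linarith
  have hsval : s = t • x := by rw [← hts]; simp
  set a : ℝ := (inner ℝ y u : ℝ) with ha_def
  have ha0 : 0 ≤ a := hyu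
  have haε : a ≤ ε := by
    calc a ≤ ‖y‖ * ‖u‖ := real_inner_le_norm y u
    _ = ‖y‖ := by rw [hu, mul_one]
    _ ≤ ε := hynorm
  -- decompose y = c • x + a • u
  have hu0 : u ≠ 0 := by intro h; rw [h] at hu; simp at hu
  have hK : Module.finrank ℝ ((ℝ ∙ u)ᗮ : Submodule ℝ E2) = 1 := by
    have h1 : Module.finrank ℝ (ℝ ∙ u : Submodule ℝ E2) = 1 :=
      finrank_span_singleton hu0
    have h2 := Submodule.finrank_add_finrank_orthogonal (𝕜 := ℝ) (ℝ ∙ u)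
    have h3 : Module.finrank ℝ E2 = 2 := by simp
    omega
  have hxK : x ∈ (ℝ ∙ u)ᗮ := by
    rw [Submodule.mem_orthogonal_singleton_iff_inner_left]; exact hxu
  have hvK : y - a • u ∈ (ℝ ∙ u)ᗮ := by
    rw [Submodule.mem_orthogonal_singleton_iff_inner_left]
    rw [inner_sub_left, real_inner_smul_left, real_inner_self_eq_norm_sq, hu]
    ring
  have hx0' : (⟨x, hxK⟩ : ((ℝ ∙ u)ᗮ : Submodule ℝ E2)) ≠ 0 := by
    simpa using hx0
  obtain ⟨c, hc⟩ := (finrank_eq_one_iff_of_nonzero' _ hx0').mp hK ⟨y - a • u, hvK⟩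
  have hc' : c • x = y - a • u := congrArg Subtype.val hc
  have hy' : y = c • x + a • u := by rw [hc']; abel
  -- norm computation
  have hn : ∀ b : ℝ, ‖b • x + a • u‖ ^ 2 = b ^ 2 * ‖x‖ ^ 2 + a ^ 2 := by
    intro b
    rw [norm_add_sq_real, real_inner_smul_left, real_inner_smul_right, hxu,
      norm_smul, norm_smul, hu]
    simp only [mul_pow, Real.norm_eq_abs, sq_abs]
    ring
  have hyn2 : c ^ 2 * ‖x‖ ^ 2 + a ^ 2 ≤ ε ^ 2 := by
    rw [← hn c, ← hy']
    have : 0 ≤ ‖y‖ := norm_nonneg y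
    nlinarith
  -- case split on t + c
  by_cases h1 : 0 ≤ t + c
  · by_cases h2 : t + c ≤ 1
    · have hseg : ∀ (z : E2) (b : ℝ), 0 ≤ b → b ≤ 1 → b • z ∈ segment ℝ (0 : E2) z := by
        intro z b hb hb1
        exact ⟨1 - b, b, by linarith, hb, by ring, by simp⟩
      refine ⟨(t + c) • x, hseg x _ h1 h2, a • u, ?_, ?_⟩
      · have hau : a • u = (a / ε) • (ε • u) := by
          rw [smul_smul, div_mul_cancel₀ _ hε.ne']
        rw [hau]
        exact hseg _ _ (div_nonneg ha0 hε.le) (div_le_one_of_le₀ haε hε.le)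
      · rw [hsval, hy']; module
    · exfalso
      push_neg at h2
      have hkey : ‖s + y - x‖ ^ 2 ≤ ε ^ 2 := by
        have heq : s + y - x = (t + c - 1) • x + a • u := by
          rw [hsval, hy']; module
        rw [heq, hn]
        have hc1 : t + c - 1 ≤ c := by linarith
        have hc2 : 0 ≤ t + c - 1 := by linarith
        have hsq : (t + c - 1) ^ 2 ≤ c ^ 2 := by nlinarith
        have := mul_le_mul_of_nonneg_right hsq (sq_nonneg ‖x‖)
        linarith
      rw [dist_eq_norm] at hpx
      have := pow_lt_pow_left₀ hpx hε.le two_ne_zero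
      linarith
  · exfalso
    push_neg at h1
    have hkey : ‖s + y‖ ^ 2 ≤ ε ^ 2 := by
      have heq : s + y = (t + c) • x + a • u := by
        rw [hsval, hy']; module
      rw [heq, hn]
      have hc1 : c ≤ t + c := by linarith
      have hc2 : t + c < 0 := h1
      have hsq : (t + c) ^ 2 ≤ c ^ 2 := by
        have h := sq_le_sq' (show -(-c) ≤ t + c by linarith) (show t + c ≤ -c by linarith)
        simpa [neg_sq] using h
      have := mul_le_mul_of_nonneg_right hsq (sq_nonneg ‖x‖)
      linarith
    have := pow_lt_pow_left₀ hp0 hε.le two_ne_zero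
    linarith

end
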